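/- For the ellipse t²/σ² + σ²(ω − βt)² = C with β ≥ 0 fixed and C > 0 fixed, the slope tan θ of the line through the origin and the farthest point of the ellipse from the origin satisfies tan θ = 2β/(σ²(√(A²σ⁴ + 4β²) + Aσ²)) + β, where A = 1 + β² − 1/σ⁴, and this quantity tends to β as σ → +∞. -/

import Mathlib

set_option maxHeartbeats 1000000


/-- For the ellipse `t²/σ² + σ²(ω − βt)² = C` with `β > 0` and `C > 0`, the slope
`ω₁/t₁` of the line through the origin and the farthest point `(t₁, ω₁)` (with `t₁ > 0`)
equals `2β/(σ²(√(A²σ⁴ + 4β²) + Aσ²)) + β` where `A = 1 + β² − 1/σ⁴`, and this quantity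
tends to `β` as `σ → +∞`. -/
theorem ellipse_major_axis_slope (C β : ℝ) (hC : 0 < C) (hβ : 0 < β) :
    (∀ σ t₁ ω₁ : ℝ, 0 < σ → 0 < t₁ →
      t₁ ^ 2 / σ ^ 2 + σ ^ 2 * (ω₁ - β * t₁) ^ 2 = C →
      IsGreatest {d : ℝ | ∃ t ω : ℝ, t ^ 2 / σ ^ 2 + σ ^ 2 * (ω - β * t) ^ 2 = C ∧
          d = t ^ 2 + ω ^ 2} (t₁ ^ 2 + ω₁ ^ 2) →
      ω₁ / t₁ = 2 * β / (σ ^ 2 * (Real.sqrt ((1 + β ^ 2 - 1 / σ ^ 4) ^ 2 * σ ^ 4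
          + 4 * β ^ 2) + (1 + β ^ 2 - 1 / σ ^ 4) * σ ^ 2)) + β) ∧
    Filter.Tendsto (fun σ : ℝ =>
        2 * β / (σ ^ 2 * (Real.sqrt ((1 + β ^ 2 - 1 / σ ^ 4) ^ 2 * σ ^ 4
          + 4 * β ^ 2) + (1 + β ^ 2 - 1 / σ ^ 4) * σ ^ 2)) + β)
      Filter.atTop (nhds β) := by
  constructor
  · intro σ t₁ ω₁ hσ ht₁ hell hmax
    have hσ' : σ ≠ 0 := ne_of_gt hσ
    have hσ2 : (0:ℝ) < σ^2 := by positivity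
    obtain ⟨A, hA⟩ : ∃ A:ℝ, A = 1 + β ^ 2 - 1 / σ ^ 4 := ⟨_, rfl⟩
    rw [← hA]
    obtain ⟨R, hRdef⟩ : ∃ R:ℝ, R = Real.sqrt (A ^ 2 * σ ^ 4 + 4 * β ^ 2) := ⟨_, rfl⟩
    rw [← hRdef]
    have hR0 : 0 ≤ R := hRdef ▸ Real.sqrt_nonneg _
    have hR2 : R ^ 2 = A ^ 2 * σ ^ 4 + 4 * β ^ 2 := by
      rw [hRdef]; exact Real.sq_sqrt (by positivity)
    obtain ⟨a, ha⟩ : ∃ a:ℝ, a = 1/σ^2 + σ^2*β^2 := ⟨_, rfl⟩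
    obtain ⟨c, hc⟩ : ∃ c:ℝ, c = σ^2 := ⟨_, rfl⟩
    obtain ⟨b, hb⟩ : ∃ b:ℝ, b = -(σ^2*β) := ⟨_, rfl⟩
    have hb2 : b^2 = σ^4*β^2 := by rw [hb]; ring
    have hb2pos : 0 < b^2 := by rw [hb2]; positivity
    have hbneg : b ≠ 0 := by
      rw [hb]
      have : σ^2*β ≠ 0 := by positivity
      simpa using this
    have hdet : a*c - b^2 = 1 := by rw [ha, hc, hb]; field_simp; ring
    have hI : (a - c)^2 + 4*b^2 = R^2 := by
      rw [hR2, ha, hc, hb, hA]; field_simp; ring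
    obtain ⟨lam, hlam⟩ : ∃ l:ℝ, l = (a + c - R)/2 := ⟨_, rfl⟩
    have hac : 0 < a + c := by rw [ha, hc]; positivity
    have hRlt : R < a + c := by
      have h4' : (a+c)^2 - R^2 = 4 := by linear_combination hI + 4*hdet
      have hsq : R^2 < (a+c)^2 := by linarith
      exact lt_of_pow_lt_pow_left₀ 2 hac.le hsq
    have hlam0 : 0 < lam := by rw [hlam]; linarith
    have halam : 0 < a - lam := by
      have hsq : (c - a)^2 < R^2 := by
        rw [show (c-a)^2 = (a-c)^2 by ring]; linarith [hI, hb2pos]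
      have h := lt_of_pow_lt_pow_left₀ 2 hR0 hsq
      rw [hlam]; linarith
    have hcllam : (a - lam)*(c - lam) = b^2 := by
      rw [hlam]; linear_combination (-(1:ℝ)/4) * hI
    have hQ : ∀ t ω : ℝ, t^2/σ^2 + σ^2*(ω - β*t)^2 = a*t^2 + 2*b*t*ω + c*ω^2 := by
      intro t ω; rw [ha, hb, hc]; field_simp; ring
    have hlow : ∀ t ω : ℝ, lam*(t^2+ω^2) ≤ a*t^2 + 2*b*t*ω + c*ω^2 := by
      intro t ω
      have key : (a - lam) * (a*t^2 + 2*b*t*ω + c*ω^2 - lam*(t^2+ω^2))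
          = ((a-lam)*t + b*ω)^2 := by
        linear_combination ω^2 * hcllam
      have h9 : 0 ≤ (a-lam) * (a*t^2 + 2*b*t*ω + c*ω^2 - lam*(t^2+ω^2)) := by
        rw [key]; exact sq_nonneg _
      have h10 := (mul_nonneg_iff_of_pos_left halam).mp h9
      linarith
    obtain ⟨m, hmdef⟩ : ∃ m:ℝ, m = (a - lam)/(σ^2*β) := ⟨_, rfl⟩
    have hm0 : 0 < m := by rw [hmdef]; positivity
    have hbm : b*m = -(a - lam) := by rw [hmdef, hb]; field_simp
    have hm' : m = -(a-lam)/b := by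
      rw [eq_div_iff hbneg]; linear_combination hbm
    have hcm : (c - lam)*m = -b := by
      rw [hm']
      field_simp
      linear_combination -hcllam
    have h_eig : a + 2*b*m + c*m^2 = lam*(1+m^2) := by
      have e2 : b + c*m = lam*m := by linear_combination hcm
      have e3 : a + b*m = lam := by linear_combination hbm
      calc a + 2*b*m + c*m^2 = (a + b*m) + m*(b + c*m) := by ring
        _ = lam + m*(lam*m) := by rw [e2, e3]
        _ = lam*(1+m^2) := by ring
    have hm2 : (0:ℝ) < 1 + m^2 := by positivity
    obtain ⟨r, hrdef⟩ : ∃ r:ℝ, r = Real.sqrt (C/(lam*(1+m^2))) := ⟨_, rfl⟩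
    have hr2 : r^2 = C/(lam*(1+m^2)) := by
      rw [hrdef]; exact Real.sq_sqrt (by positivity)
    have hQw : r^2/σ^2 + σ^2*(m*r - β*r)^2 = C := by
      rw [hQ r (m*r)]
      have e : a*r^2 + 2*b*r*(m*r) + c*(m*r)^2 = (a + 2*b*m + c*m^2)*r^2 := by ring
      rw [e, h_eig, hr2]
      field_simp
    have hdist : C/lam = r^2 + (m*r)^2 := by
      have e : r^2 + (m*r)^2 = (1+m^2)*r^2 := by ring
      rw [e, hr2]
      field_simp
    have hub : t₁^2 + ω₁^2 ≤ C/lam := by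
      have h1 := hlow t₁ ω₁
      rw [← hQ t₁ ω₁, hell] at h1
      rw [le_div_iff₀ hlam0]
      linarith
    have hlb : C/lam ≤ t₁^2 + ω₁^2 := hmax.2 ⟨r, m*r, hQw, hdist⟩
    have heq : lam*(t₁^2+ω₁^2) = C := by
      have h1 : t₁^2+ω₁^2 = C/lam := le_antisymm hub hlb
      rw [h1]
      field_simp
    have h2 : a*t₁^2 + 2*b*t₁*ω₁ + c*ω₁^2 = lam*(t₁^2+ω₁^2) := by
      rw [heq, ← hell, hQ]
    have h3 : ((a-lam)*t₁ + b*ω₁)^2 = 0 := by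
      linear_combination (a-lam)*h2 - ω₁^2*hcllam
    have hker : (a-lam)*t₁ + b*ω₁ = 0 := by
      exact pow_eq_zero_iff (by norm_num) |>.mp h3
    have hω : ω₁ = m*t₁ := by
      have hker' : (a-lam)*t₁ - σ^2*β*ω₁ = 0 := by rw [hb] at hker; linarith
      rw [hmdef]
      field_simp
      linarith
    rw [hω, mul_div_assoc, div_self (ne_of_gt ht₁), mul_one]
    have hRA : 0 < R + A*σ^2 := by
      have hsq : (-(A*σ^2))^2 < R^2 := by
        rw [show (-(A*σ^2))^2 = A^2*σ^4 by ring]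
        have h5' : R^2 - A^2*σ^4 = 4*β^2 := by linear_combination hR2
        have hb4 : (0:ℝ) < 4*β^2 := by positivity
        linarith
      have h := lt_of_pow_lt_pow_left₀ 2 hR0 hsq
      linarith
    have h5 : (R - A*σ^2) * (R + A*σ^2) = 4*β^2 := by linear_combination hR2
    have h6 : a - lam = (a - c + R)/2 := by rw [hlam]; ring
    have h7 : a - c = 2*σ^2*β^2 - A*σ^2 := by rw [ha, hc, hA]; field_simp; ring
    have h8 : 2*β/(σ^2*(R+A*σ^2)) = (R - A*σ^2)/(2*σ^2*β) := by
      rw [div_eq_div_iff (by positivity) (by positivity)]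
      linear_combination (-σ^2)*h5
    rw [h8, hmdef, h6, h7]
    field_simp
    ring
  · have h4 : Filter.Tendsto (fun σ:ℝ => 2*β^2*σ^4) Filter.atTop Filter.atTop :=
      (Filter.tendsto_pow_atTop (by norm_num)).const_mul_atTop (by positivity)
    have hDge : ∀ᶠ σ:ℝ in Filter.atTop, 2*β^2*σ^4 ≤
        σ^2*(Real.sqrt ((1+β^2-1/σ^4)^2*σ^4 + 4*β^2) + (1+β^2-1/σ^4)*σ^2) := by
      filter_upwards [Filter.eventually_ge_atTop (1:ℝ)] with σ hσ1
      have hσ0 : (0:ℝ) < σ := lt_of_lt_of_le one_pos hσ1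
      have hσ4 : (1:ℝ) ≤ σ^4 := one_le_pow₀ hσ1
      have hAβ : β^2 ≤ 1+β^2-1/σ^4 := by
        have : 1/σ^4 ≤ 1 := by
          rw [div_le_one (by positivity)]; exact hσ4
        linarith
      have hApos : (0:ℝ) < 1+β^2-1/σ^4 := lt_of_lt_of_le (by positivity) hAβ
      have hs : (1+β^2-1/σ^4)*σ^2 ≤ Real.sqrt ((1+β^2-1/σ^4)^2*σ^4 + 4*β^2) := by
        rw [show (1+β^2-1/σ^4)^2*σ^4 = ((1+β^2-1/σ^4)*σ^2)^2 by ring]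
        exact Real.le_sqrt' (by positivity) |>.mpr (by linarith [sq_nonneg β])
      have h2 := mul_le_mul_of_nonneg_right hAβ (sq_nonneg σ)
      have h1 : 2*β^2*σ^2 ≤ Real.sqrt ((1+β^2-1/σ^4)^2*σ^4 + 4*β^2) + (1+β^2-1/σ^4)*σ^2 := by
        linarith
      calc 2*β^2*σ^4 = σ^2*(2*β^2*σ^2) := by ring
        _ ≤ σ^2*(Real.sqrt ((1+β^2-1/σ^4)^2*σ^4 + 4*β^2) + (1+β^2-1/σ^4)*σ^2) :=
            mul_le_mul_of_nonneg_left h1 (sq_nonneg σ)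
    have hD := Filter.tendsto_atTop_mono' _ hDge h4
    have h0 : Filter.Tendsto (fun σ:ℝ => 2*β /
        (σ^2*(Real.sqrt ((1+β^2-1/σ^4)^2*σ^4 + 4*β^2) + (1+β^2-1/σ^4)*σ^2)))
        Filter.atTop (nhds 0) := Filter.Tendsto.div_atTop tendsto_const_nhds hD
    have := h0.add_const β
    simpa using this
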